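/- arXiv:1503.02133 — 5 statements merged into one kernel-verified Lean document; each statement's English description precedes it below -/
import Mathlib

section
/- Let A ⊆ B be a finite extension of commutative rings (B is module-finite over A). Then A is Noetherian if and only if B is Noetherian. -/
set_option maxHeartbeats 1000000

namespace EakinAux

section Transfer
variable {R S M : Type*} [Semiring R] [Semiring S] [AddCommMonoid M]
  [Module R M] [Module S M]

/-- If `R` surjects onto `S` compatibly with the actions on `M`, the submodule
lattices of `M` over `R` and over `S` agree. -/
def submoduleOrderIso (f : R →+* S) (hf : Function.Surjective f)
    (hsmul : ∀ (r : R) (m : M), r • m = f r • m) :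
    Submodule R M ≃o Submodule S M where
  toFun p :=
    { carrier := p
      add_mem' := fun h1 h2 => p.add_mem h1 h2
      zero_mem' := p.zero_mem
      smul_mem' := fun s m hm => by
        obtain ⟨r, rfl⟩ := hf s
        rw [← hsmul]; exact p.smul_mem r hm }
  invFun q :=
    { carrier := q
      add_mem' := fun h1 h2 => q.add_mem h1 h2
      zero_mem' := q.zero_mem
      smul_mem' := fun r m hm => by rw [hsmul]; exact q.smul_mem _ hm }
  left_inv p := SetLike.ext fun x => Iff.rfl
  right_inv q := SetLike.ext fun x => Iff.rfl
  map_rel_iff' := ⟨fun h x hx => h hx, fun h x hx => h hx⟩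

theorem isNoetherian_iff_of_surjective (f : R →+* S) (hf : Function.Surjective f)
    (hsmul : ∀ (r : R) (m : M), r • m = f r • m) :
    IsNoetherian R M ↔ IsNoetherian S M := by
  constructor
  · intro h
    exact isNoetherian_mk
      ⟨(submoduleOrderIso f hf hsmul (M := M)).symm.toOrderEmbedding.dual.wellFounded h.wf⟩
  · intro h
    exact isNoetherian_mk
      ⟨(submoduleOrderIso f hf hsmul (M := M)).toOrderEmbedding.dual.wellFounded h.wf⟩

theorem span_eq_top_of_surjective (f : R →+* S) (hf : Function.Surjective f)
    (hsmul : ∀ (r : R) (m : M), r • m = f r • m) {s : Set M}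
    (h : Submodule.span R s = ⊤) : Submodule.span S s = ⊤ := by
  rw [eq_top_iff]
  intro x _
  have hx : x ∈ Submodule.span R s := by rw [h]; trivial
  have hle : Submodule.span R s ≤ (submoduleOrderIso f hf hsmul).symm (Submodule.span S s) :=
    Submodule.span_le.mpr fun y hy =>
      show y ∈ Submodule.span S s from Submodule.subset_span hy
  exact hle hx

end Transfer

section Step

variable {C : Type} [CommRing C] (A : Subring C)

/-- The crucial step in Formanek's proof of the Eakin–Nagata theorem:
if `C` is a commutative ring, finitely generated as a module over a subring `A`,
and every quotient of `C` by a nonzero ideal is a Noetherian `A`-module, then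
`C` itself is a Noetherian `A`-module. -/
theorem step [Module.Finite A C]
    (hdag : ∀ W : Ideal C, W ≠ ⊥ → IsNoetherian A (C ⧸ W)) :
    IsNoetherian A C := by
  classical
  -- the family of "multiplication ranges" `T b = b • C`
  let T : C → Submodule A C := fun b => Submodule.map (LinearMap.mulLeft A b) ⊤
  have hTfg : ∀ b, (T b).FG := fun b => (Module.finite_def.mp inferInstance).map _
  have hTmem : ∀ b x, x ∈ T b ↔ ∃ y, b * y = x := by
    intro b x
    simp [T, Submodule.mem_map]
  -- Zorn: a maximal `N` with the property that `T b ≤ N → T b = ⊥`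
  obtain ⟨N, -, hNΓ, hNmax⟩ := zorn_le_nonempty₀
    {N : Submodule A C | ∀ b, T b ≤ N → T b = ⊥}
    (fun c hcΓ hchain y hy => by
      refine ⟨sSup c, ?_, fun z hz => le_sSup hz⟩
      intro b hble
      obtain ⟨z, hzc, hbz⟩ :=
        (CompleteLattice.isCompactElement_iff_le_of_directed_sSup_le _ _).mp
          ((Submodule.fg_iff_compact _).mp (hTfg b)) c ⟨y, hy⟩ hchain.directedOn hble
      exact hcΓ hzc b hbz)
    ⊥ (fun b hb => le_bot_iff.mp hb)
  -- `C ⧸ N` is a Noetherian `A`-module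
  have hMstar : IsNoetherian A (C ⧸ N) := by
    refine ⟨fun K' => ?_⟩
    have hNK : N ≤ K'.comap N.mkQ := fun x hx => by
      simp [Submodule.mem_comap, (Submodule.Quotient.mk_eq_zero N).mpr hx]
    have hKmap : (K'.comap N.mkQ).map N.mkQ = K' :=
      Submodule.map_comap_eq_of_surjective N.mkQ_surjective K'
    rcases eq_or_lt_of_le hNK with heq | hlt
    · have : K' = ⊥ := by
        rw [← hKmap, ← heq, eq_bot_iff]
        rintro x ⟨y, hy, rfl⟩
        simpa using (Submodule.Quotient.mk_eq_zero N).mpr hy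
      rw [this]; exact Submodule.fg_bot
    · -- `K` strictly contains `N`, so it is not in `Γ`
      have hKnot : ∃ b, T b ≤ K'.comap N.mkQ ∧ T b ≠ ⊥ := by
        by_contra hc
        push_neg at hc
        exact absurd (hNmax hc hlt.le) hlt.not_ge
      obtain ⟨b, hbK, hbne⟩ := hKnot
      have hTW : (Ideal.span {b}).restrictScalars A = T b := by
        ext x
        rw [hTmem]
        simp only [Submodule.restrictScalars_mem, Ideal.mem_span_singleton']
        exact ⟨fun ⟨a, ha⟩ => ⟨a, by rw [mul_comm]; exact ha⟩,
          fun ⟨a, ha⟩ => ⟨a, by rw [mul_comm]; exact ha⟩⟩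
      have hWne : Ideal.span {b} ≠ ⊥ := by
        intro h
        apply hbne
        rw [← hTW, h]
        rfl
      have h1 : IsNoetherian A (C ⧸ Ideal.span {b}) := hdag _ hWne
      have h3 : IsNoetherian A (C ⧸ ((Ideal.span {b}).restrictScalars A)) :=
        isNoetherian_of_linearEquiv
          (Submodule.Quotient.restrictScalarsEquiv A (Ideal.span {b})).symm
      -- now `K` is an extension of the f.g. `T b` by a submodule of a Noetherian module
      have hfg : (K'.comap N.mkQ).FG := by
        apply Submodule.fg_of_fg_map_of_fg_inf_ker ((Ideal.span {b}).restrictScalars A).mkQ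
        · exact IsNoetherian.noetherian _
        · rw [Submodule.ker_mkQ, hTW, inf_eq_right.mpr hbK, ← hTW]
          exact hTW ▸ hTfg b
      rw [← hKmap]
      exact hfg.map _
  -- `A` is a Noetherian ring
  obtain ⟨s, hs⟩ := Module.finite_def.mp (inferInstance : Module.Finite A C)
  haveI hA'noeth : IsNoetherianRing A := by
    rw [isNoetherianRing_iff]
    refine isNoetherian_of_injective
      (LinearMap.pi fun i : (s : Finset C) =>
        LinearMap.toSpanSingleton A (C ⧸ N) (N.mkQ i)) ?_
    rw [← LinearMap.ker_eq_bot, eq_bot_iff]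
    intro a ha
    simp only [LinearMap.mem_ker, LinearMap.pi_apply, LinearMap.toSpanSingleton_apply,
      funext_iff] at ha
    have hTa : T (a : C) ≤ N := by
      have : Submodule.map (LinearMap.mulLeft A (a : C)) (Submodule.span A (s : Set C)) ≤ N := by
        rw [Submodule.map_span, Submodule.span_le]
        rintro x ⟨y, hy, rfl⟩
        have : a • N.mkQ y = 0 := ha ⟨y, hy⟩
        rw [← map_smul, Submodule.mkQ_apply, Submodule.Quotient.mk_eq_zero] at this
        simp [Algebra.smul_def] at this ⊢
        exact this
      rwa [hs] at this
    have hTbot : T (a : C) = ⊥ := hNΓ _ hTa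
    have : (a : C) ∈ T (a : C) := (hTmem _ _).mpr ⟨1, mul_one _⟩
    rw [hTbot] at this
    simpa using Subtype.ext (by simpa using this : (a : C) = 0)
  exact isNoetherian_of_isNoetherianRing_of_finite A C

end Step

end EakinAux

/-- **Eakin–Nagata / Hilbert basis.**
Let `A ⊆ B` be a finite extension of commutative rings (that is, `B` is
finitely generated as a module over the subring `A`).  Then `A` is Noetherian
if and only if `B` is Noetherian. -/
theorem finite_extension_noetherian_iff
    {B : Type} [CommRing B] (A : Subring B) (hfin : Module.Finite A B) :
    IsNoetherianRing A ↔ IsNoetherianRing B := by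
  haveI := hfin
  constructor
  · -- Hilbert basis direction
    intro h
    have : IsNoetherian A B := isNoetherian_of_isNoetherianRing_of_finite A B
    exact isNoetherian_of_tower A this
  · -- Eakin–Nagata direction
    intro hB
    -- it suffices that `B` is a Noetherian `A`-module
    suffices hAB : IsNoetherian A B by
      exact isNoetherianRing_iff.mpr
        (isNoetherian_of_injective (Algebra.linearMap A B) fun a b hab => Subtype.ext hab)
    by_contra hnB
    -- choose an ideal `J₀` of `B` maximal with `B ⧸ J₀` not Noetherian over `A`
    obtain ⟨J₀, hJ₀S, hJ₀max⟩ :=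
      (isNoetherianRing_iff.mp hB).wf.has_min
        {J : Ideal B | ¬ IsNoetherian A (B ⧸ J)}
        ⟨⊥, by
          intro hbot
          apply hnB
          have hinj : Function.Injective (Ideal.Quotient.mk (⊥ : Ideal B)) := by
            intro x y h
            have := Ideal.Quotient.eq.mp h
            simpa [sub_eq_zero] using this
          have e : B ≃ₗ[A] (B ⧸ (⊥ : Ideal B)) :=
            LinearEquiv.ofBijective (Ideal.Quotient.mkₐ A (⊥ : Ideal B)).toLinearMap
              ⟨by simpa [Ideal.Quotient.mkₐ_eq_mk] using hinj, Ideal.Quotient.mkₐ_surjective A _⟩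
          exact isNoetherian_of_linearEquiv e.symm⟩
    simp only [Set.mem_setOf_eq] at hJ₀S hJ₀max
    -- (†) : every quotient of `B ⧸ J₀` by a nonzero ideal is Noetherian over `A`
    have hdag : ∀ W : Ideal (B ⧸ J₀), W ≠ ⊥ → IsNoetherian A ((B ⧸ J₀) ⧸ W) := by
      intro W hW
      have hle : J₀ ≤ W.comap (Ideal.Quotient.mk J₀) := by
        intro x hx
        simp [Ideal.mem_comap, Ideal.Quotient.eq_zero_iff_mem.mpr hx]
      have hlt : J₀ < W.comap (Ideal.Quotient.mk J₀) := by
        rcases lt_or_eq_of_le hle with h | h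
        · exact h
        · exfalso
          apply hW
          rw [eq_bot_iff]
          intro w hw
          obtain ⟨b, rfl⟩ := Ideal.Quotient.mk_surjective w
          have hb : b ∈ W.comap (Ideal.Quotient.mk J₀) := Ideal.mem_comap.mpr hw
          rw [← h] at hb
          simpa using Ideal.Quotient.eq_zero_iff_mem.mpr hb
      have hJnoeth : IsNoetherian A (B ⧸ W.comap (Ideal.Quotient.mk J₀)) := by
        by_contra hc
        exact hJ₀max _ hc hlt
      have hmap : (W.comap (Ideal.Quotient.mk J₀)).map (Ideal.Quotient.mkₐ A J₀) = W := by
        have h2 : (W.comap (Ideal.Quotient.mk J₀)).map (Ideal.Quotient.mk J₀) = W :=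
          Ideal.map_comap_of_surjective _ Ideal.Quotient.mk_surjective W
        exact h2
      have e := (DoubleQuot.quotQuotEquivQuotOfLEₐ (R := A) hle).symm.toLinearEquiv
      rw [hmap] at e
      exact isNoetherian_of_linearEquiv e
    -- transfer everything to the image subring `A'` of `A` in `B ⧸ J₀`
    have hfsurj : Function.Surjective ((Ideal.Quotient.mk J₀).comp A.subtype).rangeRestrict :=
      RingHom.rangeRestrict_surjective _
    -- `B ⧸ J₀` is a finite module over `A'`
    haveI hfinA : Module.Finite A (B ⧸ J₀) :=
      Module.Finite.of_surjective (Ideal.Quotient.mkₐ A J₀).toLinearMap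
        (Ideal.Quotient.mkₐ_surjective A _)
    obtain ⟨s, hs⟩ := Module.finite_def.mp hfinA
    have hsm : ∀ (a : A) (m : B ⧸ J₀),
        a • m = ((Ideal.Quotient.mk J₀).comp A.subtype).rangeRestrict a • m := by
      intro a m
      rw [Algebra.smul_def, Algebra.smul_def]
      rfl
    haveI hfinA' : Module.Finite (((Ideal.Quotient.mk J₀).comp A.subtype).range) (B ⧸ J₀) :=
      Module.finite_def.mpr
        ⟨s, EakinAux.span_eq_top_of_surjective _ hfsurj hsm hs⟩
    -- quotients by nonzero ideals are Noetherian over `A'` as well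
    have hdag' : ∀ W : Ideal (B ⧸ J₀), W ≠ ⊥ →
        IsNoetherian (((Ideal.Quotient.mk J₀).comp A.subtype).range) ((B ⧸ J₀) ⧸ W) := by
      intro W hW
      have hsm2 : ∀ (a : A) (m : (B ⧸ J₀) ⧸ W),
          a • m = ((Ideal.Quotient.mk J₀).comp A.subtype).rangeRestrict a • m := by
        intro a m
        obtain ⟨x, rfl⟩ := Ideal.Quotient.mk_surjective m
        obtain ⟨y, rfl⟩ := Ideal.Quotient.mk_surjective x
        rfl
      exact (EakinAux.isNoetherian_iff_of_surjective (M := (B ⧸ J₀) ⧸ W) _ hfsurj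
        hsm2).mp (hdag W hW)
    -- apply the key step
    have hstep := EakinAux.step (((Ideal.Quotient.mk J₀).comp A.subtype).range) hdag'
    exact hJ₀S ((EakinAux.isNoetherian_iff_of_surjective (M := B ⧸ J₀) _ hfsurj
      hsm).mpr hstep)
end

section
/- Let A ⊆ B be a finite extension of commutative rings of characteristic p > 0. Then A is Noetherian and F-finite if and only if B is Noetherian and F-finite. -/
open Submodule

section Formanek

variable {R M : Type*} [CommRing R] [AddCommGroup M] [Module R M]

private lemma mem_ann_quot {N : Submodule R M} {r : R} :
    r ∈ Module.annihilator R (M ⧸ N) ↔ ∀ m : M, r • m ∈ N := by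
  rw [Module.mem_annihilator]
  constructor
  · intro h m
    have := h (Submodule.Quotient.mk m)
    rwa [← Submodule.Quotient.mk_smul, Submodule.Quotient.mk_eq_zero] at this
  · intro h x
    obtain ⟨m, rfl⟩ := Submodule.Quotient.mk_surjective N x
    rw [← Submodule.Quotient.mk_smul, Submodule.Quotient.mk_eq_zero]
    exact h m

private lemma ann_le_ann_quot (N : Submodule R M) :
    Module.annihilator R M ≤ Module.annihilator R (M ⧸ N) := by
  intro r hr
  refine mem_ann_quot.mpr fun m => ?_
  rw [Module.mem_annihilator.mp hr m]
  exact N.zero_mem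

/-- Core of Formanek's proof of the Eakin–Nagata theorem:
if `M` is a finitely generated module such that `M ⧸ I • ⊤` is a Noetherian
module whenever `I • ⊤ ≠ ⊥`, then `M` is a Noetherian module. -/
private lemma formanek_core [Module.Finite R M]
    (H : ∀ I : Ideal R, I • (⊤ : Submodule R M) ≠ ⊥ →
      IsNoetherian R (M ⧸ (I • ⊤ : Submodule R M))) :
    IsNoetherian R M := by
  classical
  obtain ⟨s, hs⟩ : (⊤ : Submodule R M).FG := Module.finite_def.mp inferInstance
  set Λ : Set (Submodule R M) :=
    {N | Module.annihilator R (M ⧸ N) = Module.annihilator R M} with hΛ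
  have hbot : (⊥ : Submodule R M) ∈ Λ := by
    refine le_antisymm ?_ (ann_le_ann_quot ⊥)
    intro r hr
    rw [Module.mem_annihilator]
    intro m
    simpa using mem_ann_quot.mp hr m
  -- Zorn's lemma: a maximal N₀ with ann(M / N₀) = ann M
  have hzorn : ∃ N₀, (⊥ : Submodule R M) ≤ N₀ ∧ Maximal (· ∈ Λ) N₀ := by
    refine zorn_le_nonempty₀ Λ ?_ ⊥ hbot
    intro c hcΛ hchain y hyc
    refine ⟨sSup c, ?_, fun z hz => le_sSup hz⟩
    refine le_antisymm ?_ (ann_le_ann_quot _)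
    intro r hr
    replace hr := mem_ann_quot.mp hr
    have hdir : DirectedOn (· ≤ ·) c := hchain.directedOn
    have key : ∀ t : Finset M, ∃ N ∈ c, ∀ x ∈ t, r • x ∈ N := by
      intro t
      induction t using Finset.induction_on with
      | empty => exact ⟨y, hyc, by simp⟩
      | @insert a t _ ih =>
        obtain ⟨N₁, hN₁, h₁⟩ := ih
        obtain ⟨N₂, hN₂, h₂⟩ :=
          (Submodule.mem_sSup_of_directed ⟨y, hyc⟩ hdir).mp (hr a)
        obtain ⟨N₃, hN₃, l₁, l₂⟩ := hdir N₁ hN₁ N₂ hN₂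
        refine ⟨N₃, hN₃, fun x hx => ?_⟩
        rcases Finset.mem_insert.mp hx with rfl | hx
        · exact l₂ h₂
        · exact l₁ (h₁ x hx)
    obtain ⟨N, hNc, hN⟩ := key s
    have hrN : r ∈ Module.annihilator R (M ⧸ N) := by
      refine mem_ann_quot.mpr fun m => ?_
      have hm : m ∈ span R (↑s : Set M) := by rw [hs]; trivial
      refine Submodule.span_induction (p := fun x _ => r • x ∈ N)
        (fun x hx => hN x hx) (by simp) ?_ ?_ hm
      · intro x z _ _ hx hz
        rw [smul_add]; exact N.add_mem hx hz
      · intro a x _ hx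
        rw [smul_comm]; exact N.smul_mem a hx
    rwa [hcΛ hNc] at hrN
  obtain ⟨N₀, -, hmax⟩ := hzorn
  have hN₀Λ : Module.annihilator R (M ⧸ N₀) = Module.annihilator R M := hmax.1
  -- every quotient by a submodule strictly above N₀ is Noetherian
  have step : ∀ N : Submodule R M, N₀ < N → IsNoetherian R (M ⧸ N) := by
    intro N hlt
    have hle : Module.annihilator R M ≤ Module.annihilator R (M ⧸ N) :=
      ann_le_ann_quot N
    have hne : Module.annihilator R (M ⧸ N) ≠ Module.annihilator R M := by
      intro h
      have hNΛ : N ∈ Λ := h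
      exact absurd (hmax.2 hNΛ hlt.le) hlt.not_ge
    obtain ⟨a, haI, haM⟩ :
        ∃ a, a ∈ Module.annihilator R (M ⧸ N) ∧ a ∉ Module.annihilator R M := by
      by_contra h
      push_neg at h
      exact hne (le_antisymm h hle)
    have hIT : Module.annihilator R (M ⧸ N) • (⊤ : Submodule R M) ≠ ⊥ := by
      obtain ⟨m, hm⟩ : ∃ m : M, a • m ≠ 0 := by
        by_contra h
        push_neg at h
        exact haM (Module.mem_annihilator.mpr h)
      intro hbot'
      refine hm ?_
      have hmem : a • m ∈ Module.annihilator R (M ⧸ N) • (⊤ : Submodule R M) :=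
        Submodule.smul_mem_smul haI Submodule.mem_top
      rwa [hbot', Submodule.mem_bot] at hmem
    have hsub : Module.annihilator R (M ⧸ N) • (⊤ : Submodule R M) ≤ N :=
      Submodule.smul_le.mpr fun a' ha' m _ => mem_ann_quot.mp ha' m
    haveI := H _ hIT
    have surj : Function.Surjective (Submodule.mapQ _ N LinearMap.id hsub) := by
      intro x
      obtain ⟨m, rfl⟩ := Submodule.Quotient.mk_surjective N x
      exact ⟨Submodule.Quotient.mk m, by simp [Submodule.mapQ_apply]⟩
    exact isNoetherian_of_surjective _ (LinearMap.range_eq_top.mpr surj)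
  -- hence M ⧸ N₀ is Noetherian
  haveI hquot : IsNoetherian R (M ⧸ N₀) := by
    rw [isNoetherian_def]
    intro P
    by_cases hP : P = (⊥ : Submodule R (M ⧸ N₀))
    · rw [hP]; exact Submodule.fg_bot
    · obtain ⟨x, hxP, hx0⟩ := (Submodule.ne_bot_iff P).mp hP
      set N : Submodule R M := (span R {x}).comap N₀.mkQ with hNdef
      have hlt : N₀ < N := by
        rw [lt_iff_le_and_ne]
        constructor
        · intro m hm
          have : N₀.mkQ m = 0 := by
            rw [Submodule.mkQ_apply, Submodule.Quotient.mk_eq_zero]; exact hm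
          rw [hNdef, Submodule.mem_comap, this]
          exact Submodule.zero_mem _
        · intro h
          obtain ⟨m, hm⟩ := Submodule.Quotient.mk_surjective N₀ x
          have hmN : m ∈ N := by
            rw [hNdef, Submodule.mem_comap, Submodule.mkQ_apply, hm]
            exact Submodule.subset_span rfl
          rw [← h] at hmN
          refine hx0 ?_
          rw [← hm]
          exact (Submodule.Quotient.mk_eq_zero N₀).mpr hmN
      haveI := step N hlt
      have hmapN : N.map N₀.mkQ = span R {x} :=
        Submodule.map_comap_eq_of_surjective (Submodule.Quotient.mk_surjective N₀) _
      have e : ((M ⧸ N₀) ⧸ (N.map N₀.mkQ)) ≃ₗ[R] (M ⧸ N) :=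
        Submodule.quotientQuotientEquivQuotient N₀ N hlt.le
      rw [hmapN] at e
      haveI : IsNoetherian R ((M ⧸ N₀) ⧸ (span R {x} : Submodule R (M ⧸ N₀))) :=
        isNoetherian_of_linearEquiv e.symm
      refine Submodule.fg_of_fg_map_of_fg_inf_ker
        (span R {x} : Submodule R (M ⧸ N₀)).mkQ ?_ ?_
      · exact IsNoetherian.noetherian _
      · rw [Submodule.ker_mkQ,
          inf_eq_right.mpr (Submodule.span_le.mpr (by simpa using hxP))]
        exact Submodule.fg_span (Set.finite_singleton x)
  -- the annihilator J
  set J : Ideal R := Module.annihilator R M with hJdef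
  -- R ⧸ J is a Noetherian R-module
  obtain ⟨t, ht⟩ : (⊤ : Submodule R (M ⧸ N₀)).FG := Module.finite_def.mp inferInstance
  let θ : R →ₗ[R] (↥t → M ⧸ N₀) :=
    LinearMap.pi fun i => LinearMap.toSpanSingleton R _ (i : M ⧸ N₀)
  have hker : LinearMap.ker θ = J := by
    ext r
    constructor
    · intro h
      rw [← hN₀Λ, Module.mem_annihilator]
      intro m
      have hm : m ∈ span R (↑t : Set (M ⧸ N₀)) := by rw [ht]; trivial
      have hgen : ∀ x ∈ (↑t : Set (M ⧸ N₀)), r • x = 0 := by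
        intro x hx
        have := congrFun (LinearMap.mem_ker.mp h) ⟨x, hx⟩
        simpa [θ, LinearMap.toSpanSingleton_apply] using this
      refine Submodule.span_induction (p := fun x _ => r • x = 0)
        hgen (by simp) ?_ ?_ hm
      · intro x z _ _ hx hz; rw [smul_add, hx, hz, add_zero]
      · intro a x _ hx; rw [smul_comm, hx, smul_zero]
    · intro h
      rw [← hN₀Λ] at h
      refine LinearMap.mem_ker.mpr (funext fun i => ?_)
      simpa [θ, LinearMap.toSpanSingleton_apply] using
        Module.mem_annihilator.mp h (i : M ⧸ N₀)
  haveI : IsNoetherian R (↥t → M ⧸ N₀) := isNoetherian_pi'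
  haveI hRJ : IsNoetherian R (R ⧸ J) := by
    have e : (R ⧸ J) ≃ₗ[R] LinearMap.range θ :=
      (Submodule.quotEquivOfEq J (LinearMap.ker θ) hker.symm).trans θ.quotKerEquivRange
    exact isNoetherian_of_linearEquiv e.symm
  -- M is a quotient of a finite power of R ⧸ J
  classical
  have hann : ∀ x : M, J ≤ LinearMap.ker (LinearMap.toSpanSingleton R M x) := by
    intro x r hr
    rw [LinearMap.mem_ker, LinearMap.toSpanSingleton_apply]
    exact Module.mem_annihilator.mp hr x
  let ψ : (↥s → R ⧸ J) →ₗ[R] M :=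
    LinearMap.lsum R (fun _ : ↥s => R ⧸ J) R fun i =>
      Submodule.liftQ J (LinearMap.toSpanSingleton R M (i : M)) (hann (i : M))
  have hψ : LinearMap.range ψ = ⊤ := by
    rw [eq_top_iff, ← hs, Submodule.span_le]
    intro x hx
    let v : ↥s → R ⧸ J := Pi.single ⟨x, hx⟩ (Submodule.Quotient.mk (1 : R))
    refine ⟨v, ?_⟩
    have hv : ∀ j : ↥s,
        (Submodule.liftQ J (LinearMap.toSpanSingleton R M (j : M)) (hann (j : M)))
          (v j) = if j = ⟨x, hx⟩ then x else 0 := by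
      intro j
      rcases eq_or_ne j ⟨x, hx⟩ with rfl | hj
      · have h1 : (Submodule.liftQ J (LinearMap.toSpanSingleton R M x) (hann x))
            (Submodule.Quotient.mk (1 : R)) = x := by
          rw [Submodule.liftQ_apply, LinearMap.toSpanSingleton_apply, one_smul]
        simpa [v] using h1
      · simp [v, Pi.single_apply, hj]
    calc ψ v
        = ∑ j : ↥s, (Submodule.liftQ J (LinearMap.toSpanSingleton R M (j : M))
            (hann (j : M))) (v j) := by
          simp [ψ, LinearMap.lsum_apply]
      _ = ∑ j : ↥s, if j = ⟨x, hx⟩ then x else 0 :=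
          Finset.sum_congr rfl fun j _ => hv j
      _ = x := by simp
  haveI : IsNoetherian R (↥s → R ⧸ J) := isNoetherian_pi'
  exact isNoetherian_of_surjective ψ hψ

end Formanek

/-- **Eakin–Nagata**: if `B` is a Noetherian ring, module-finite over a subring
(image of an injective algebra map) `A`, then `A` is Noetherian. -/
private theorem isNoetherianRing_of_finite_of_injective
    {A B : Type*} [CommRing A] [CommRing B] [Algebra A B]
    [Module.Finite A B] [IsNoetherianRing B]
    (hinj : Function.Injective (algebraMap A B)) : IsNoetherianRing A := by
  have hBA : IsNoetherian A B := by
    by_contra hnot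
    set Γ : Set (Ideal A) :=
      {I | ¬ IsNoetherian A (B ⧸ (I • ⊤ : Submodule A B))} with hΓ
    have hbotΓ : (⊥ : Ideal A) ∈ Γ := by
      intro h
      refine hnot ?_
      have e : (B ⧸ ((⊥ : Ideal A) • ⊤ : Submodule A B)) ≃ₗ[A] B :=
        Submodule.quotEquivOfEqBot _ (by simp)
      exact isNoetherian_of_linearEquiv e
    haveI : IsNoetherian B B := isNoetherianRing_iff.mp inferInstance
    have hwf : WellFounded ((· > ·) : Ideal B → Ideal B → Prop) :=
      (inferInstance : WellFoundedGT (Submodule B B)).wf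
    obtain ⟨mB, hmBmem, hminB⟩ := hwf.has_min
      ((fun I : Ideal A => I.map (algebraMap A B)) '' Γ)
      ⟨_, Set.mem_image_of_mem _ hbotΓ⟩
    obtain ⟨I₀, hI₀Γ, rfl⟩ := hmBmem
    refine hI₀Γ (formanek_core ?_)
    intro I hIne
    have hmap : (I • ⊤ : Submodule A (B ⧸ (I₀ • ⊤ : Submodule A B)))
        = ((I • ⊤ : Submodule A B)).map (I₀ • ⊤ : Submodule A B).mkQ := by
      rw [Submodule.map_smul'', Submodule.map_top, Submodule.range_mkQ]
    have hmapbot : ((I₀ • ⊤ : Submodule A B)).map (I₀ • ⊤ : Submodule A B).mkQ = ⊥ := by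
      rw [eq_bot_iff]
      rintro x ⟨b, hb, rfl⟩
      simpa [Submodule.mkQ_apply, Submodule.Quotient.mk_eq_zero] using hb
    have hKne : ¬ (I • ⊤ : Submodule A B) ≤ (I₀ • ⊤ : Submodule A B) := by
      intro hle
      refine hIne ?_
      rw [hmap, eq_bot_iff]
      calc ((I • ⊤ : Submodule A B)).map (I₀ • ⊤ : Submodule A B).mkQ
          ≤ ((I₀ • ⊤ : Submodule A B)).map (I₀ • ⊤ : Submodule A B).mkQ :=
            Submodule.map_mono hle
        _ = ⊥ := hmapbot
    have hsupΓ : (I ⊔ I₀ : Ideal A) ∉ Γ := by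
      intro hmem
      refine hminB _ (Set.mem_image_of_mem _ hmem) ?_
      refine lt_of_le_of_ne (Ideal.map_mono le_sup_right) ?_
      intro heq
      refine hKne ?_
      have h1 : ((I ⊔ I₀ : Ideal A) • ⊤ : Submodule A B)
          = (I₀ • ⊤ : Submodule A B) := by
        rw [Ideal.smul_top_eq_map, Ideal.smul_top_eq_map, ← heq]
      calc (I • ⊤ : Submodule A B)
          ≤ ((I ⊔ I₀ : Ideal A) • ⊤ : Submodule A B) :=
            Submodule.smul_mono_left le_sup_left
        _ = (I₀ • ⊤ : Submodule A B) := h1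
    have hNoeth : IsNoetherian A (B ⧸ ((I ⊔ I₀ : Ideal A) • ⊤ : Submodule A B)) :=
      not_not.mp hsupΓ
    have hle : (I₀ • ⊤ : Submodule A B) ≤ ((I ⊔ I₀ : Ideal A) • ⊤ : Submodule A B) :=
      Submodule.smul_mono_left le_sup_right
    have hmapK : (((I ⊔ I₀ : Ideal A) • ⊤ : Submodule A B)).map
          (I₀ • ⊤ : Submodule A B).mkQ
        = (I • ⊤ : Submodule A (B ⧸ (I₀ • ⊤ : Submodule A B))) := by
      rw [Submodule.sup_smul, Submodule.map_sup, hmapbot, sup_bot_eq, hmap]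
    have e := Submodule.quotientQuotientEquivQuotient
      (I₀ • ⊤ : Submodule A B) ((I ⊔ I₀ : Ideal A) • ⊤ : Submodule A B) hle
    rw [hmapK] at e
    exact isNoetherian_of_linearEquiv e.symm
  haveI := hBA
  exact isNoetherianRing_iff.mpr
    (isNoetherian_of_injective (Algebra.linearMap A B) hinj)

/-- If `g : A →+* A`, `f : A →+* B` is injective, `f ∘ g` is finite and `A` is
Noetherian, then `g` is finite. -/
private theorem ringHom_finite_of_comp_injective
    {A B : Type*} [CommRing A] [CommRing B]
    (g : A →+* A) (f : A →+* B) (hinj : Function.Injective f)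
    (hN : IsNoetherianRing A) (h : (f.comp g).Finite) : g.Finite := by
  letI : Algebra A B := (f.comp g).toAlgebra
  letI : Algebra A A := g.toAlgebra
  letI : Module A A := Algebra.toModule
  haveI hfin : Module.Finite A B := h
  haveI : IsNoetherian A B := isNoetherian_of_isNoetherianRing_of_finite A B
  let F : A →ₗ[A] B :=
    { toFun := f
      map_add' := map_add f
      map_smul' := fun a x => by
        show f (g a * x) = f (g a) * f x
        exact map_mul f _ _ }
  exact Module.Finite.of_injective F hinj

/-- **Finite extensions and F-finiteness.**
Let `A ⊆ B` be a finite extension of commutative rings of characteristic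
`p > 0`.  Then `A` is Noetherian and F-finite if and only if `B` is
Noetherian and F-finite.  Here a ring `R` of characteristic `p` is F-finite
if the Frobenius endomorphism `frobenius R p` is a finite ring map, i.e. `R`
is module-finite over its subring `R^p`. -/
theorem finite_extension_noetherian_F_finite_iff
    {B : Type} [CommRing B] (p : ℕ) (hp : p.Prime) [CharP B p]
    (A : Subring B) [CharP A p]
    [ExpChar A p] [ExpChar B p]
    (hfin : Module.Finite A B) :
    (IsNoetherianRing A ∧ (frobenius A p).Finite) ↔
      (IsNoetherianRing B ∧ (frobenius B p).Finite) := by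
  haveI := hfin
  have hinj : Function.Injective (algebraMap A B) := Subtype.val_injective
  have hcomm : (algebraMap A B).comp (frobenius A p)
      = (frobenius B p).comp (algebraMap A B) := by
    ext a
    simp [frobenius_def]
  have hfinmap : (algebraMap A B).Finite := hfin
  constructor
  · rintro ⟨hA, hFA⟩
    haveI := hA
    haveI hAB : IsNoetherian A B := isNoetherian_of_isNoetherianRing_of_finite A B
    refine ⟨isNoetherianRing_iff.mpr (isNoetherian_of_tower A hAB), ?_⟩
    have h1 : ((frobenius B p).comp (algebraMap A B)).Finite := by
      rw [← hcomm]
      exact RingHom.Finite.comp hfinmap hFA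
    exact RingHom.Finite.of_comp_finite h1
  · rintro ⟨hB, hFB⟩
    haveI := hB
    have hA : IsNoetherianRing A := isNoetherianRing_of_finite_of_injective hinj
    refine ⟨hA, ?_⟩
    have h1 : ((algebraMap A B).comp (frobenius A p)).Finite := by
      rw [hcomm]
      exact RingHom.Finite.comp hFB hfinmap
    exact ringHom_finite_of_comp_injective _ _ hinj hA h1
end

section
/- Let Z = Spec B be an affine Noetherian scheme and M a finite B-module satisfying (S'_1). Then for any ideal I of B with height at least 1 (i.e., the open set U = Z \ V(I) is strongly dense), the restriction map M → Γ(U, M~) is injective. -/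
open CategoryTheory AlgebraicGeometry

/-- Depth via local cohomology at the maximal ideal (following the paper). -/
noncomputable def localDepth (A : Type) [CommRing A] [IsLocalRing A]
    (M : Type) [AddCommGroup M] [Module A M] : ℕ∞ :=
  sInf {n : ℕ∞ | ∃ m : ℕ, n = (m : ℕ∞) ∧
    Nontrivial ((localCohomology (IsLocalRing.maximalIdeal A) m).obj (ModuleCat.of A M))}

/-- `depth_{A_P} M_P` for a prime `P`. -/
noncomputable def primeLocalDepth (A : Type) [CommRing A] (P : Ideal A)
    (hP : P.IsPrime) (M : Type) [AddCommGroup M] [Module A M] : ℕ∞ :=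
  haveI := hP
  localDepth (Localization.AtPrime P) (LocalizedModule P.primeCompl M)

/-- `dim A_P`, the height of the prime `P`. -/
noncomputable def primeKrullDim (A : Type) [CommRing A] (P : Ideal A)
    (hP : P.IsPrime) : WithBot ℕ∞ :=
  haveI := hP
  ringKrullDim (Localization.AtPrime P)

/-- `dim M_P`, the dimension of the localized module. -/
noncomputable def primeModuleDim (A : Type) [CommRing A] (P : Ideal A)
    (hP : P.IsPrime) (M : Type) [AddCommGroup M] [Module A M] : WithBot ℕ∞ :=
  haveI := hP
  Order.krullDim
    (Module.support (Localization.AtPrime P) (LocalizedModule P.primeCompl M))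

/-- Serre's condition `(S_n)`: `depth M_P ≥ min (n, dim M_P)` for all primes `P`. -/
def SerreS (A : Type) [CommRing A] (M : Type) [AddCommGroup M] [Module A M]
    (n : ℕ) : Prop :=
  ∀ (P : Ideal A) (hP : P.IsPrime),
    min (n : WithBot ℕ∞) (primeModuleDim A P hP M) ≤
      (primeLocalDepth A P hP M : WithBot ℕ∞)

/-- Serre's condition `(S'_n)`: `depth M_P ≥ min (n, dim A_P)` for all primes `P`. -/
def SerreS' (A : Type) [CommRing A] (M : Type) [AddCommGroup M] [Module A M]
    (n : ℕ) : Prop :=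
  ∀ (P : Ideal A) (hP : P.IsPrime),
    min (n : WithBot ℕ∞) (primeKrullDim A P hP) ≤
      (primeLocalDepth A P hP M : WithBot ℕ∞)

/-- The ideal `I` has height at least `n`: every prime containing `I` has height
at least `n` in `Spec B`. -/
def IdealHeightGE (B : Type) [CommRing B] (I : Ideal B) (n : ℕ) : Prop :=
  ∀ (P : Ideal B) (hP : P.IsPrime), I ≤ P →
    (n : ℕ∞) ≤ Order.height (⟨P, hP⟩ : PrimeSpectrum B)

/-- The complement of `V(I)` in `Spec B`, as an open subset. -/
def complementZeroLocus (B : Type) [CommRing B] (I : Ideal B) :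
    TopologicalSpace.Opens (PrimeSpectrum.Top B) :=
  ⟨(PrimeSpectrum.zeroLocus (I : Set B))ᶜ,
    (PrimeSpectrum.isClosed_zeroLocus _).isOpen_compl⟩

open CategoryTheory.Limits

noncomputable instance linYonPreservesLimits (A : Type) [CommRing A] (Y : ModuleCat.{0} A) :
    PreservesLimits ((linearYoneda A (ModuleCat A)).obj Y) := by
  have e : (linearYoneda A (ModuleCat A)).obj Y ⋙ forget (ModuleCat A) ≅ yoneda.obj Y :=
    NatIso.ofComponents (fun X => Iso.refl _) (by intros; rfl)
  have h1 : PreservesLimits ((linearYoneda A (ModuleCat A)).obj Y ⋙ forget (ModuleCat A)) :=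
    preservesLimits_of_natIso e.symm
  have h2 : ReflectsLimits (forget (ModuleCat A)) := reflectsLimits_of_reflectsIsomorphisms
  exact preservesLimits_of_reflects_of_preserves _ (forget (ModuleCat A))

lemma nontrivial_H0 (A : Type) [CommRing A] (J : Ideal A)
    (N : Type) [AddCommGroup N] [Module A N] (y : N) (hy : y ≠ 0)
    (hJy : ∀ a ∈ J, a • y = 0) :
    Nontrivial ((localCohomology J 0).obj (ModuleCat.of A N)) := by
  classical
  let C := ModuleCat.{0} A
  let NN : C := ModuleCat.of A N
  let FN := (linearYoneda A C).obj NN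
  haveI : PreservesFiniteLimits FN := PreservesLimits.preservesFiniteLimits FN
  haveI : PreservesFiniteColimits FN.rightOp := preservesFiniteColimits_rightOp _
  let Ipow := localCohomology.idealPowersDiagram J
  let R := localCohomology.ringModIdeals (D := ℕᵒᵖ) Ipow
  let D := localCohomology.diagram Ipow 0
  let L := FN.rightOp.leftDerived 0
  have hG : D ⋙ (evaluation C C).obj NN = R.op ⋙ L.leftOp := rfl
  let e0 : L ≅ FN.rightOp := FN.rightOp.leftDerivedZeroIsoSelf
  let eL : L.leftOp ≅ FN := NatIso.ofComponents (fun X => (e0.app X.unop).unop.symm)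
    (fun f => (congrArg Quiver.Hom.unop (e0.inv.naturality f.unop)).symm)
  let eG : D ⋙ (evaluation C C).obj NN ≅ R.op ⋙ FN := eqToIso hG ≪≫ Functor.isoWhiskerLeft R.op eL
  let G' := R.op ⋙ FN
  let g : A →ₗ[A] N := LinearMap.toSpanSingleton A N y
  have hker : (J ^ 1 : Ideal A) ≤ LinearMap.ker g := by
    rw [pow_one]
    intro a ha
    simpa [g, LinearMap.mem_ker] using hJy a ha
  let t0 : (A ⧸ (J ^ 1 : Ideal A)) →ₗ[A] N := Submodule.liftQ _ g hker
  let j1 : (ℕᵒᵖ)ᵒᵖ := Opposite.op (Opposite.op 1)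
  let t : G'.obj j1 := ModuleCat.ofHom t0
  have happ : t0 (Submodule.Quotient.mk 1) = y := by
    rw [Submodule.liftQ_apply, LinearMap.toSpanSingleton_apply, one_smul]
  have hcol : colimit.ι G' j1 t ≠ 0 := by
    intro h0
    obtain ⟨j', i, hmap⟩ := Concrete.colimit_rep_eq_zero A G' j1 t h0
    let s : (R.obj (Opposite.unop j') ⟶ NN) := (G'.map i).hom t
    have h5 : s.hom (Submodule.Quotient.mk (1 : A)) =
        t0 (Submodule.Quotient.mk (1 : A)) := rfl
    have h6 : s = 0 := hmap
    have h7 : s.hom (Submodule.Quotient.mk (1 : A)) = 0 := by rw [h6]; rfl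
    rw [h5, happ] at h7
    exact hy h7
  let Φ : (localCohomology J 0).obj NN ≅ colimit G' :=
    (colimitObjIsoColimitCompEvaluation D NN) ≪≫ HasColimit.isoOfNatIso eG
  let eqv := ((forget C).mapIso Φ).toEquiv
  exact ⟨⟨eqv.symm (colimit.ι G' j1 t), eqv.symm 0, fun h => hcol (by simpa using congrArg eqv h)⟩⟩

/-- **(S'₁) and sections over strongly dense opens.**
Let `Z = Spec B` be an affine Noetherian scheme and `M` a finite `B`-module
satisfying `(S'_1)`.  Then for any ideal `I` of `B` of height at least `1`
(i.e. such that `U = Z \ V(I)` is strongly dense), the restriction map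
`M → Γ(U, M~)` is injective. -/
theorem restriction_injective_of_serreS'_one
    (B : Type) [CommRing B] [IsNoetherianRing B]
    (M : Type) [AddCommGroup M] [Module B M] [Module.Finite B M]
    (hM : SerreS' B M 1)
    (I : Ideal B) (hI : IdealHeightGE B I 1) :
    Function.Injective
      (tilde.toOpen (ModuleCat.of (CommRingCat.of B) M) (complementZeroLocus B I)) := by
  set U := complementZeroLocus B I
  -- reduce to kernel triviality
  suffices h : ∀ m : M, tilde.toOpen (ModuleCat.of (CommRingCat.of B) M) U m = 0 → m = 0 by
    intro a b hab
    have : tilde.toOpen (ModuleCat.of (CommRingCat.of B) M) U (a - b) = 0 := by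
      rw [map_sub, hab, sub_self]
    have := h _ this
    rwa [sub_eq_zero] at this
  intro m h0
  by_contra hm
  obtain ⟨P, hPass, hPle⟩ :=
    exists_le_isAssociatedPrime_of_isNoetherianRing B (M := M) m hm
  obtain ⟨hPprime, x, hx⟩ := isAssociatedPrime_iff.mp hPass
  -- P contains I
  have hIP : I ≤ P := by
    by_contra hnot
    have hxU : (⟨P, hPprime⟩ : PrimeSpectrum B) ∈ U := by
      exact fun h => hnot ((PrimeSpectrum.mem_zeroLocus _ _).mp h)
    have hval : (LocalizedModule.mk m 1 :
        LocalizedModule (⟨P, hPprime⟩ : PrimeSpectrum B).asIdeal.primeCompl M) = 0 := by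
      have := congrFun (congrArg Subtype.val (show StructureSheaf.toOpenₗ B M U m = 0 from h0)) ⟨⟨P, hPprime⟩, hxU⟩
      exact this
    obtain ⟨r, hrS, hr0⟩ := LocalizedModule.mem_ker_mkLinearMap_iff.mp (by
      simpa [LinearMap.mem_ker] using hval)
    exact hrS (hPle (Submodule.mem_colon_singleton.mpr ((Submodule.mem_bot B).mpr hr0)))
  -- height ≥ 1
  have hht := hI P hPprime hIP
  have hmin : ¬ IsMin (⟨P, hPprime⟩ : PrimeSpectrum B) := by
    intro hmi
    rw [Order.height_eq_zero.mpr hmi] at hht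
    simp at hht
  obtain ⟨qt, hq⟩ := not_isMin_iff.mp hmin
  letI S := Localization.AtPrime P
  have hdisj : ∀ (p : Ideal B), p ≤ P → Disjoint (↑P.primeCompl : Set B) (p : Set B) := by
    intro p hp
    rw [Set.disjoint_left]
    intro a ha hap
    exact ha (hp hap)
  let oi := IsLocalization.orderIsoOfPrime P.primeCompl S
  let y1 := oi.symm ⟨qt.asIdeal, qt.isPrime, hdisj _ (le_of_lt hq)⟩
  let y2 := oi.symm ⟨P, hPprime, hdisj _ le_rfl⟩
  have hy12 : y1 < y2 := by
    apply oi.symm.lt_iff_lt.mpr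
    exact Subtype.mk_lt_mk.mpr hq
  have hdim : ((1 : ℕ) : WithBot ℕ∞) ≤ primeKrullDim B P hPprime := by
    let c : LTSeries (PrimeSpectrum S) :=
      { length := 1
        toFun := ![⟨y1.1, y1.2⟩, ⟨y2.1, y2.2⟩]
        step := by
          intro i
          fin_cases i
          exact hy12 }
    have hlen := Order.LTSeries.length_le_krullDim c
    simpa [c, primeKrullDim, ringKrullDim] using hlen
  have hser := hM P hPprime
  rw [min_eq_left hdim] at hser
  let N := LocalizedModule P.primeCompl M
  let yel : N := LocalizedModule.mk x 1
  have hyne : yel ≠ 0 := by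
    intro h
    obtain ⟨r, hrS, hr0⟩ := LocalizedModule.mem_ker_mkLinearMap_iff.mp (by
      simpa [LinearMap.mem_ker] using h)
    exact hrS (by rw [hx]; exact Submodule.mem_colon_singleton.mpr ((Submodule.mem_bot B).mpr hr0))
  have hJy : ∀ a ∈ IsLocalRing.maximalIdeal S, a • yel = 0 := by
    intro a ha
    obtain ⟨⟨r, s⟩, rfl⟩ := IsLocalization.mk'_surjective P.primeCompl a
    have hrP : r ∈ P := (IsLocalization.AtPrime.mk'_mem_maximal_iff S P r s).mp ha
    have hrx : r • x = 0 :=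
      (Submodule.mem_bot B).mp (Submodule.mem_colon_singleton.mp (by rwa [hx] at hrP))
    rw [← Localization.mk_eq_mk']
    show (Localization.mk r s : S) • (LocalizedModule.mk x 1 : N) = 0
    rw [LocalizedModule.mk_smul_mk, hrx, LocalizedModule.zero_mk]
  have hH0 : Nontrivial ((localCohomology (IsLocalRing.maximalIdeal S) 0).obj
      (ModuleCat.of S N)) := nontrivial_H0 S _ N yel hyne hJy
  have hd0 : primeLocalDepth B P hPprime M ≤ 0 := sInf_le ⟨0, by simp, hH0⟩
  have hcon : ((1 : ℕ) : WithBot ℕ∞) ≤ ((0 : ℕ∞) : WithBot ℕ∞) :=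
    le_trans hser (by exact_mod_cast hd0)
  norm_num at hcon
end

section
/- Let (R, P) be a ℤ^s-graded homogeneous DVR with P = (α) for a homogeneous element α, and let Q be the localization of R at the set of all nonzero homogeneous elements. Then Q = R[α^{-1}] and R = Q ∩ R_P (intersection inside the fraction field). -/
/-- A subring `V` of a field `K` is a discrete valuation ring with fraction
field `K`: there is a nonzero non-unit `π ∈ V` such that every nonzero element
of `K` is a unit of `V` times an integer power of `π`. -/
def Subring.IsDVRWithFractionField {K : Type} [Field K] (V : Subring K) : Prop :=
  ∃ π : K, π ∈ V ∧ π ≠ 0 ∧ π⁻¹ ∉ V ∧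
    ∀ x : K, x ≠ 0 → ∃ (u : K) (n : ℤ), u ∈ V ∧ u⁻¹ ∈ V ∧ x = u * π ^ n

/-- A domain `R` is a Krull domain: there is a family of discrete valuation
subrings of its fraction field whose intersection is `R` and which has finite
character (every nonzero element of the fraction field is a unit in all but
finitely many members of the family). -/
def IsKrullDomain (R : Type) [CommRing R] [IsDomain R] : Prop :=
  ∃ (ι : Type) (V : ι → Subring (FractionRing R)),
    (∀ i, (V i).IsDVRWithFractionField) ∧
    (Set.range (algebraMap R (FractionRing R)) = ⋂ i, (V i : Set (FractionRing R))) ∧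
    (∀ x : FractionRing R, x ≠ 0 → {i | ¬ (x ∈ V i ∧ x⁻¹ ∈ V i)}.Finite)

section Graded

variable {s : ℕ} {B : Type} [CommRing B] [IsDomain B]
  (𝒜 : (Fin s → ℤ) → AddSubgroup B) [GradedRing 𝒜]

/-- The multiplicative set of nonzero homogeneous elements of a `ℤ^s`-graded
domain. -/
def homogeneousSubmonoid : Submonoid B where
  carrier := {x | x ≠ 0 ∧ ∃ lam : Fin s → ℤ, x ∈ 𝒜 lam}
  one_mem' := ⟨one_ne_zero, 0, SetLike.one_mem_graded 𝒜⟩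
  mul_mem' := by
    rintro a b ⟨ha, i, hi⟩ ⟨hb, j, hj⟩
    exact ⟨mul_ne_zero ha hb, i + j, SetLike.mul_mem_graded hi hj⟩

/-- The ideal `P` has height one: every prime over `P` has height at least one,
and some prime over `P` has height exactly one. -/
def IdealHeightOne (R : Type) [CommRing R] (P : Ideal R) : Prop :=
  (∀ (Q : Ideal R) (hQ : Q.IsPrime), P ≤ Q →
      1 ≤ Order.height (⟨Q, hQ⟩ : PrimeSpectrum R)) ∧
    ∃ (Q : Ideal R) (hQ : Q.IsPrime), P ≤ Q ∧
      Order.height (⟨Q, hQ⟩ : PrimeSpectrum R) = 1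

/-- `P` is the unique graded ("`G`"-)maximal ideal: it is a proper homogeneous
ideal containing every proper homogeneous ideal. -/
def IsUniqueGradedMaximal (P : Ideal B) : Prop :=
  Ideal.IsHomogeneous 𝒜 P ∧ P ≠ ⊤ ∧
    ∀ J : Ideal B, Ideal.IsHomogeneous 𝒜 J → J ≠ ⊤ → J ≤ P

end Graded
lemma lex_add_lt_add_right' {s : ℕ} {x y z : Fin s → ℤ} (h : toLex x < toLex y) :
    toLex (x + z) < toLex (y + z) := by
  obtain ⟨i, hj, hi⟩ := h
  exact ⟨i, fun j hji => by have := hj j hji; simp only [Pi.toLex_apply, Pi.add_apply] at this ⊢; rw [this], by simpa using hi⟩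

lemma lex_trichotomy {s : ℕ} (x y : Fin s → ℤ) :
    toLex x < toLex y ∨ x = y ∨ toLex y < toLex x :=
  lt_trichotomy (toLex x) (toLex y)

lemma exists_lex_max {s : ℕ} (A : Finset (Fin s → ℤ)) (h : A.Nonempty) :
    ∃ l0 ∈ A, ∀ l ∈ A, l = l0 ∨ toLex l < toLex l0 := by
  classical
  induction A using Finset.induction_on with
  | empty => exact absurd h (by simp)
  | @insert a A' ha ih =>
    rcases A'.eq_empty_or_nonempty with rfl | hne
    · refine ⟨a, Finset.mem_insert_self _ _, ?_⟩
      intro l hl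
      rcases Finset.mem_insert.1 hl with rfl | hl'
      · exact Or.inl rfl
      · exact absurd hl' (Finset.notMem_empty _)
    · obtain ⟨l0, hl0, hmax⟩ := ih hne
      rcases lex_trichotomy a l0 with hlt | heq | hgt
      · refine ⟨l0, Finset.mem_insert_of_mem hl0, ?_⟩
        intro l hl
        rcases Finset.mem_insert.1 hl with rfl | hl'
        · exact Or.inr hlt
        · exact hmax l hl'
      · subst heq
        refine ⟨a, Finset.mem_insert_self _ _, ?_⟩
        intro l hl
        rcases Finset.mem_insert.1 hl with rfl | hl'
        · exact Or.inl rfl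
        · exact hmax l hl'
      · refine ⟨a, Finset.mem_insert_self _ _, ?_⟩
        intro l hl
        rcases Finset.mem_insert.1 hl with rfl | hl'
        · exact Or.inl rfl
        · rcases hmax l hl' with rfl | hlt'
          · exact Or.inr hgt
          · exact Or.inr (hlt'.trans hgt)

lemma lex_eq_of_le_of_le {s : ℕ} {l l0 m m0 : Fin s → ℤ}
    (h1 : l = l0 ∨ toLex l < toLex l0)
    (h2 : m = m0 ∨ toLex m < toLex m0) (hsum : l + m = l0 + m0) : l = l0 ∧ m = m0 := by
  have hll : l = l0 := by
    rcases h1 with h | h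
    · exact h
    · exfalso
      have k1 : toLex (l + m) < toLex (l0 + m) := lex_add_lt_add_right' h
      have k2 : toLex (l + m) < toLex (l0 + m0) := by
        rcases h2 with h' | h'
        · rw [← h']; exact k1
        · have k3 := lex_add_lt_add_right' (z := l0) h'
          have e1 : m + l0 = l0 + m := by ring
          have e2 : m0 + l0 = l0 + m0 := by ring
          rw [e1, e2] at k3
          exact k1.trans k3
      rw [hsum] at k2
      exact absurd k2 (lt_irrefl _)
  refine ⟨hll, ?_⟩
  rw [hll] at hsum
  exact add_left_cancel hsum


section AuxGraded

variable {s : ℕ} {R : Type} [CommRing R] [IsDomain R]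
  (𝒜 : (Fin s → ℤ) → AddSubgroup R) [GradedRing 𝒜]

lemma hom_div_hom' {a b c : R} {lam nu : Fin s → ℤ} (ha : a ∈ 𝒜 lam) (ha0 : a ≠ 0)
    (hc : c ∈ 𝒜 nu) (h : a * b = c) : b ∈ 𝒜 (nu - lam) := by
  classical
  have hcomp : ∀ mu : Fin s → ℤ, mu ≠ nu - lam → (DirectSum.decompose 𝒜 b mu : R) = 0 := by
    intro mu hmu
    have h1 : (DirectSum.decompose 𝒜 (a * b) (lam + mu) : R) =
        a * DirectSum.decompose 𝒜 b mu :=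
      DirectSum.coe_decompose_mul_add_of_left_mem 𝒜 ha
    have hne : nu ≠ lam + mu := by
      intro heq
      exact hmu (by rw [heq, add_sub_cancel_left])
    have h2 : (DirectSum.decompose 𝒜 c (lam + mu) : R) = 0 :=
      DirectSum.decompose_of_mem_ne 𝒜 hc hne
    rw [h] at h1
    have := h1.symm.trans h2
    exact (mul_eq_zero.1 this).resolve_left ha0
  have hb := DirectSum.sum_support_decompose 𝒜 b
  rw [← hb]
  apply sum_mem
  intro i hi
  rcases eq_or_ne i (nu - lam) with rfl | hne
  · exact SetLike.coe_mem _
  · rw [hcomp i hne]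
    exact zero_mem _

lemma unit_of_hom_not_dvd' {P : Ideal R} (hmax : IsUniqueGradedMaximal 𝒜 P) {α a : R}
    (hα : P = Ideal.span {α}) {lam : Fin s → ℤ} (ha : a ∈ 𝒜 lam) (hnd : ¬ α ∣ a) :
    IsUnit a := by
  by_contra hu
  have hsp : Ideal.span ({a} : Set R) ≠ ⊤ := fun h => hu (Ideal.span_singleton_eq_top.1 h)
  have hhom : Ideal.IsHomogeneous 𝒜 (Ideal.span {a}) := by
    apply Ideal.homogeneous_span
    rintro x (rfl : x = a)
    exact ⟨lam, ha⟩
  have hle := hmax.2.2 _ hhom hsp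
  have : a ∈ P := hle (Ideal.subset_span rfl)
  rw [hα, Ideal.mem_span_singleton] at this
  exact hnd this

lemma alpha_prime' {P : Ideal R} (hmax : IsUniqueGradedMaximal 𝒜 P) {α : R}
    (hα : P = Ideal.span {α}) {lamα : Fin s → ℤ} (hαmem : α ∈ 𝒜 lamα)
    (hα0 : α ≠ 0) (hαnu : ¬ IsUnit α) : Prime α := by
  classical
  refine ⟨hα0, hαnu, ?_⟩
  intro a b hdvd
  by_contra hcon
  push_neg at hcon
  obtain ⟨hna, hnb⟩ := hcon
  set Da := DirectSum.decompose 𝒜 a with hDa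
  set Db := DirectSum.decompose 𝒜 b with hDb
  set A : Finset (Fin s → ℤ) := Da.support.filter (fun l => ¬ α ∣ (Da l : R)) with hA
  set Bs : Finset (Fin s → ℤ) := Db.support.filter (fun l => ¬ α ∣ (Db l : R)) with hB
  have hAne : A.Nonempty := by
    by_contra hAe
    rw [Finset.not_nonempty_iff_eq_empty] at hAe
    apply hna
    have ha := DirectSum.sum_support_decompose 𝒜 a
    rw [← ha]
    apply Finset.dvd_sum
    intro i hi
    by_contra hdd
    have : i ∈ A := Finset.mem_filter.2 ⟨hi, hdd⟩
    rw [hAe] at this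
    exact absurd this (Finset.notMem_empty _)
  have hBne : Bs.Nonempty := by
    by_contra hAe
    rw [Finset.not_nonempty_iff_eq_empty] at hAe
    apply hnb
    have ha := DirectSum.sum_support_decompose 𝒜 b
    rw [← ha]
    apply Finset.dvd_sum
    intro i hi
    by_contra hdd
    have : i ∈ Bs := Finset.mem_filter.2 ⟨hi, hdd⟩
    rw [hAe] at this
    exact absurd this (Finset.notMem_empty _)
  obtain ⟨l0, hl0A, hl0max⟩ := exists_lex_max A hAne
  obtain ⟨m0, hm0B, hm0max⟩ := exists_lex_max Bs hBne
  set δ : Fin s → ℤ := l0 + m0 with hδ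
  -- α divides the δ-component of a * b
  obtain ⟨c, hc⟩ := hdvd
  have hdivcomp : α ∣ (DirectSum.decompose 𝒜 (a * b) δ : R) := by
    rw [hc]
    have : (DirectSum.decompose 𝒜 (α * c) (lamα + (δ - lamα)) : R) =
        α * DirectSum.decompose 𝒜 c (δ - lamα) :=
      DirectSum.coe_decompose_mul_add_of_left_mem 𝒜 hαmem
    rw [add_sub_cancel] at this
    rw [this]
    exact Dvd.intro _ rfl
  -- the δ-component as a sum
  have hsum : (DirectSum.decompose 𝒜 (a * b) δ : R) =
      ∑ ij ∈ (Da.support ×ˢ Db.support).filter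
        (fun ij : (Fin s → ℤ) × (Fin s → ℤ) => ij.1 + ij.2 = δ),
        ((Da ij.1 : R) * (Db ij.2 : R)) := by
    rw [DirectSum.decompose_mul]
    exact DirectSum.coe_mul_apply 𝒜 Da Db δ
  set S := (Da.support ×ˢ Db.support).filter
      (fun ij : (Fin s → ℤ) × (Fin s → ℤ) => ij.1 + ij.2 = δ) with hS
  have hpairS : (l0, m0) ∈ S := by
    apply Finset.mem_filter.2
    refine ⟨Finset.mem_product.2 ⟨(Finset.mem_filter.1 hl0A).1, (Finset.mem_filter.1 hm0B).1⟩, rfl⟩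
  have hrest : ∀ ij ∈ S.erase (l0, m0), α ∣ ((Da ij.1 : R) * (Db ij.2 : R)) := by
    rintro ⟨l, m⟩ hij
    have hne := (Finset.mem_erase.1 hij).1
    have hmemS := (Finset.mem_erase.1 hij).2
    have hsum' : l + m = δ := (Finset.mem_filter.1 hmemS).2
    have hmemprod := (Finset.mem_filter.1 hmemS).1
    by_cases h1 : α ∣ (Da l : R)
    · exact Dvd.dvd.mul_right h1 _
    by_cases h2 : α ∣ (Db m : R)
    · exact Dvd.dvd.mul_left h2 _
    exfalso
    have hlA : l ∈ A := Finset.mem_filter.2 ⟨(Finset.mem_product.1 hmemprod).1, h1⟩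
    have hmB : m ∈ Bs := Finset.mem_filter.2 ⟨(Finset.mem_product.1 hmemprod).2, h2⟩
    have := lex_eq_of_le_of_le (hl0max l hlA) (hm0max m hmB) hsum'
    exact hne (Prod.ext this.1 this.2)
  have hterm : α ∣ (Da l0 : R) * (Db m0 : R) := by
    have htot : α ∣ ∑ ij ∈ S, ((Da ij.1 : R) * (Db ij.2 : R)) := by
      rw [← hsum]; exact hdivcomp
    have hrestsum : α ∣ ∑ ij ∈ S.erase (l0, m0), ((Da ij.1 : R) * (Db ij.2 : R)) :=
      Finset.dvd_sum hrest
    have hsplit := Finset.add_sum_erase S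
      (fun ij : (Fin s → ℤ) × (Fin s → ℤ) => (Da ij.1 : R) * (Db ij.2 : R)) hpairS
    have : (Da l0 : R) * (Db m0 : R) =
        (∑ ij ∈ S, ((Da ij.1 : R) * (Db ij.2 : R))) -
        ∑ ij ∈ S.erase (l0, m0), ((Da ij.1 : R) * (Db ij.2 : R)) := by
      rw [← hsplit]; ring
    rw [this]
    exact dvd_sub htot hrestsum
  have hunit : IsUnit (Da l0 : R) :=
    unit_of_hom_not_dvd' 𝒜 hmax hα (SetLike.coe_mem _) (Finset.mem_filter.1 hl0A).2
  have : α ∣ (Db m0 : R) := (IsUnit.dvd_mul_left hunit).1 hterm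
  exact (Finset.mem_filter.1 hm0B).2 this

end AuxGraded

lemma pow_dvd_bound {R : Type} [CommRing R] [IsDomain R] (hKrull : IsKrullDomain R)
    {α : R} (hα0 : α ≠ 0) (hαnu : ¬ IsUnit α) (t : R) (ht : t ≠ 0) :
    ∃ N : ℕ, ∀ k : ℕ, α ^ k ∣ t → k ≤ N := by
  obtain ⟨ι, V, hDVR, hrange, -⟩ := hKrull
  set K := FractionRing R
  set f := algebraMap R K with hf
  have finj : Function.Injective f := IsFractionRing.injective R K
  have hfα0 : f α ≠ 0 := fun h => hα0 (finj (by rw [h, map_zero]))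
  have hft0 : f t ≠ 0 := fun h => ht (finj (by rw [h, map_zero]))
  -- find an index where (f α)⁻¹ is not in V i
  have hex : ∃ i, (f α)⁻¹ ∉ V i := by
    by_contra hall
    push_neg at hall
    have : (f α)⁻¹ ∈ Set.range f := by
      rw [hrange]
      exact Set.mem_iInter.2 fun i => hall i
    obtain ⟨β, hβ⟩ := this
    apply hαnu
    have : α * β = 1 := by
      apply finj
      rw [map_mul, map_one, hβ, mul_inv_cancel₀ hfα0]
    exact IsUnit.of_mul_eq_one _ this
  obtain ⟨i, hi⟩ := hex
  obtain ⟨π, hπV, hπ0, hπinv, hπall⟩ := hDVR i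
  -- basic facts about powers of π
  have hP1 : ∀ k : ℤ, 0 ≤ k → π ^ k ∈ V i := by
    intro k hk
    lift k to ℕ using hk
    rw [zpow_natCast]
    exact pow_mem hπV k
  have hP2 : ∀ k : ℤ, 0 < k → (π ^ k)⁻¹ ∉ V i := by
    intro k hk hmem
    apply hπinv
    have hform : π⁻¹ = π ^ (k - 1) * (π ^ k)⁻¹ := by
      rw [← zpow_neg, ← zpow_add₀ hπ0]
      rw [show k - 1 + -k = (-1 : ℤ) by ring, zpow_neg_one]
    rw [hform]
    exact mul_mem (hP1 _ (by omega)) hmem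
  -- key one-sided claim used to prove uniqueness of exponents
  have hkey : ∀ (u w : K) (na nb : ℤ), u ≠ 0 → u ∈ V i → w⁻¹ ∈ V i →
      u * π ^ na = w * π ^ nb → ¬ nb < na := by
    intro u w na nb hu0 hu hwi heq hlt
    have hπna : (π : K) ^ nb ≠ 0 := zpow_ne_zero _ hπ0
    have hw : w = u * π ^ (na - nb) := by
      have : u * (π ^ (na - nb) * π ^ nb) = w * π ^ nb := by
        rw [← zpow_add₀ hπ0]
        rw [sub_add_cancel]
        exact heq
      field_simp at this
      exact (mul_right_cancel₀ hπna (by linear_combination this)).symm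
    have hmem : (π ^ (na - nb))⁻¹ ∈ V i := by
      have : (π ^ (na - nb))⁻¹ = w⁻¹ * u := by
        rw [hw, mul_inv, mul_comm u⁻¹ (π ^ (na - nb))⁻¹, mul_assoc, inv_mul_cancel₀ hu0, mul_one]
      rw [this]
      exact mul_mem hwi hu
    exact hP2 _ (by omega) hmem
  have huniq : ∀ (u w : K) (na nb : ℤ), u ≠ 0 → u ∈ V i → u⁻¹ ∈ V i → w ∈ V i → w⁻¹ ∈ V i →
      u * π ^ na = w * π ^ nb → na = nb := by
    intro u w na nb hu0 hu hui hw hwi heq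
    have hw0 : w ≠ 0 := by
      intro h
      rw [h, zero_mul] at heq
      exact (mul_ne_zero hu0 (zpow_ne_zero _ hπ0)) heq
    rcases lt_trichotomy na nb with h | h | h
    · exact absurd h (hkey w u nb na hw0 hw hui heq.symm)
    · exact h
    · exact absurd h (hkey u w na nb hu0 hu hwi heq)
  -- decompose f α
  obtain ⟨uα, nα, huα, huαi, hαeq⟩ := hπall (f α) hfα0
  have huα0 : uα ≠ 0 := by
    intro h
    rw [h, zero_mul] at hαeq
    exact hfα0 hαeq
  have hnα : 0 < nα := by
    by_contra hle
    push_neg at hle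
    apply hi
    have : (f α)⁻¹ = uα⁻¹ * π ^ (-nα) := by
      rw [hαeq, mul_inv, zpow_neg]
    rw [this]
    exact mul_mem huαi (hP1 _ (by omega))
  obtain ⟨w, m, hw, hwi, hteq⟩ := hπall (f t) hft0
  have hw0 : w ≠ 0 := by
    intro h
    rw [h, zero_mul] at hteq
    exact hft0 hteq
  refine ⟨m.toNat, ?_⟩
  intro k hdvd
  obtain ⟨c, hc⟩ := hdvd
  have hc0 : c ≠ 0 := by
    rintro rfl
    rw [mul_zero] at hc
    exact ht hc
  have hfc0 : f c ≠ 0 := fun h => hc0 (finj (by rw [h, map_zero]))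
  obtain ⟨w', m', hw', hw'i, hceq⟩ := hπall (f c) hfc0
  have hw'0 : w' ≠ 0 := by
    intro h
    rw [h, zero_mul] at hceq
    exact hfc0 hceq
  have hfcV : f c ∈ V i := by
    have : f c ∈ Set.range f := ⟨c, rfl⟩
    rw [hrange] at this
    exact Set.mem_iInter.1 this i
  have hm' : 0 ≤ m' := by
    by_contra hneg
    push_neg at hneg
    have hmem : (π ^ (-m'))⁻¹ ∈ V i := by
      have : (π ^ (-m'))⁻¹ = w'⁻¹ * f c := by
        rw [zpow_neg, inv_inv, hceq]
        field_simp
      rw [this]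
      exact mul_mem hw'i hfcV
    exact hP2 _ (by omega) hmem
  -- the main valuation computation
  have heqn : w * π ^ m = (uα ^ k * w') * π ^ (nα * k + m') := by
    rw [← hteq]
    rw [show f t = f α ^ k * f c from by rw [← map_pow, ← map_mul, ← hc]]
    rw [hαeq, hceq]
    rw [mul_pow, ← zpow_natCast (π ^ nα) k, ← zpow_mul]
    rw [zpow_add₀ hπ0]
    ring
  have hmm : m = nα * k + m' :=
    huniq w (uα ^ k * w') m (nα * k + m') hw0 hw hwi
      (mul_mem (pow_mem huα k) hw')
      (by rw [mul_inv, ← inv_pow]; exact mul_mem (pow_mem huαi k) hw'i)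
      heqn
  have : (k : ℤ) ≤ m := by
    rw [hmm]
    have : (k : ℤ) ≤ nα * k := le_mul_of_one_le_left (by positivity) hnα
    omega
  omega

/-- **The homogeneous localization of a homogeneous DVR.**
Let `(R, P)` be a `ℤ^s`-graded homogeneous DVR (a graded Krull domain with
unique graded maximal ideal `P` of height one) with `P = (α)` for a homogeneous
element `α`, and let `Q` be the localization of `R` at the set of all nonzero
homogeneous elements.  Then, inside the fraction field, `Q = R[α⁻¹]` and
`R = Q ∩ R_P`. -/
theorem homogeneous_dvr_localization_eq
    {s : ℕ} {R : Type} [CommRing R] [IsDomain R]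
    (𝒜 : (Fin s → ℤ) → AddSubgroup R) [GradedRing 𝒜]
    (hKrull : IsKrullDomain R)
    (P : Ideal R) (hmax : IsUniqueGradedMaximal 𝒜 P)
    (hht : IdealHeightOne R P)
    (α : R) (hα : P = Ideal.span {α}) (hαhom : ∃ lam : Fin s → ℤ, α ∈ 𝒜 lam) :
    ({x : FractionRing R | ∃ r t : R, t ∈ homogeneousSubmonoid 𝒜 ∧
        algebraMap R (FractionRing R) t * x = algebraMap R (FractionRing R) r}
      = {x : FractionRing R | ∃ (n : ℕ) (r : R),
          (algebraMap R (FractionRing R) α) ^ n * x = algebraMap R (FractionRing R) r}) ∧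
    (Set.range (algebraMap R (FractionRing R)) =
      {x : FractionRing R | ∃ r t : R, t ∈ homogeneousSubmonoid 𝒜 ∧
        algebraMap R (FractionRing R) t * x = algebraMap R (FractionRing R) r} ∩
      {x : FractionRing R | ∃ r t : R, t ∉ P ∧
        algebraMap R (FractionRing R) t * x = algebraMap R (FractionRing R) r}) := by
  classical
  obtain ⟨lamα, hαmem⟩ := hαhom
  set f := algebraMap R (FractionRing R) with hf
  have finj : Function.Injective f := IsFractionRing.injective R (FractionRing R)
  -- α is nonzero
  have hα0 : α ≠ 0 := by
    rintro rfl
    have hP : P = ⊥ := by rw [hα, Ideal.span_singleton_eq_bot.2 rfl]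
    have hbot : (⊥ : Ideal R).IsPrime := Ideal.bot_prime
    have h1 := hht.1 ⊥ hbot (by rw [hP])
    have hmin : IsMin (⟨⊥, hbot⟩ : PrimeSpectrum R) := by
      intro b hb
      exact (PrimeSpectrum.asIdeal_le_asIdeal _ _).1 bot_le
    rw [Order.height_eq_zero.2 hmin] at h1
    simp at h1
  have hfα0 : f α ≠ 0 := fun h => hα0 (finj (by rw [h, map_zero]))
  have hαnu : ¬ IsUnit α := by
    intro h
    exact hmax.2.1 (by rw [hα, Ideal.span_singleton_eq_top]; exact h)
  have hprime : Prime α := alpha_prime' 𝒜 hmax hα hαmem hα0 hαnu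
  -- factorization of nonzero homogeneous elements as unit times a power of α
  have main : ∀ N : ℕ, ∀ t : R, t ≠ 0 → (∃ lam, t ∈ 𝒜 lam) →
      (∀ k : ℕ, α ^ k ∣ t → k ≤ N) → ∃ (k : ℕ) (u : R), IsUnit u ∧ t = α ^ k * u := by
    intro N
    induction N with
    | zero =>
      intro t ht hhom hbd
      obtain ⟨lam, hlam⟩ := hhom
      have hnd : ¬ α ∣ t := by
        intro hd
        have := hbd 1 (by simpa using hd)
        omega
      exact ⟨0, t, unit_of_hom_not_dvd' 𝒜 hmax hα hlam hnd, by rw [pow_zero, one_mul]⟩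
    | succ N ih =>
      intro t ht hhom hbd
      obtain ⟨lam, hlam⟩ := hhom
      by_cases hd : α ∣ t
      · obtain ⟨t₁, ht₁⟩ := hd
        have ht₁0 : t₁ ≠ 0 := by
          rintro rfl
          rw [mul_zero] at ht₁
          exact ht ht₁
        have ht₁hom : t₁ ∈ 𝒜 (lam - lamα) := hom_div_hom' 𝒜 hαmem hα0 hlam ht₁.symm
        have hbd' : ∀ k : ℕ, α ^ k ∣ t₁ → k ≤ N := by
          intro k hk
          obtain ⟨c, hc⟩ := hk
          have : α ^ (k + 1) ∣ t := ⟨c, by rw [ht₁, hc, pow_succ]; ring⟩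
          have := hbd (k + 1) this
          omega
        obtain ⟨k, u, hu, heq⟩ := ih t₁ ht₁0 ⟨_, ht₁hom⟩ hbd'
        exact ⟨k + 1, u, hu, by rw [ht₁, heq, pow_succ]; ring⟩
      · exact ⟨0, t, unit_of_hom_not_dvd' 𝒜 hmax hα hlam hd, by rw [pow_zero, one_mul]⟩
  have hfact : ∀ t : R, t ≠ 0 → (∃ lam, t ∈ 𝒜 lam) →
      ∃ (k : ℕ) (u : R), IsUnit u ∧ t = α ^ k * u := by
    intro t ht hhom
    obtain ⟨N, hN⟩ := pow_dvd_bound hKrull hα0 hαnu t ht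
    exact main N t ht hhom hN
  -- Part 1 : Q = R[α⁻¹]
  have h1 : ({x : FractionRing R | ∃ r t : R, t ∈ homogeneousSubmonoid 𝒜 ∧
        f t * x = f r}
      = {x : FractionRing R | ∃ (n : ℕ) (r : R), f α ^ n * x = f r}) := by
    ext x
    constructor
    · rintro ⟨r, t, ht, hx⟩
      obtain ⟨ht0, lam, htl⟩ := ht
      obtain ⟨k, u, hu, heq⟩ := hfact t ht0 ⟨lam, htl⟩
      obtain ⟨v, huv⟩ := hu.exists_right_inv
      have hx' : f α ^ k * f u * x = f r := by
        rw [← map_pow, ← map_mul, ← heq]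
        exact hx
      have h2 : f u * f v = 1 := by rw [← map_mul, huv, map_one]
      refine ⟨k, v * r, ?_⟩
      calc f α ^ k * x = (f u * f v) * (f α ^ k * x) := by rw [h2, one_mul]
        _ = f v * (f α ^ k * f u * x) := by ring
        _ = f v * f r := by rw [hx']
        _ = f (v * r) := by rw [map_mul]
    · rintro ⟨n, r, hx⟩
      refine ⟨r, α ^ n, ⟨pow_ne_zero n hα0, n • lamα, SetLike.pow_mem_graded n hαmem⟩, ?_⟩
      rw [map_pow]
      exact hx
  refine ⟨h1, ?_⟩
  -- Part 2 : R = Q ∩ R_P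
  ext x
  constructor
  · rintro ⟨r, rfl⟩
    have h1P : (1 : R) ∉ P := fun h => hmax.2.1 ((Ideal.eq_top_iff_one P).2 h)
    exact ⟨⟨r, 1, ⟨one_ne_zero, 0, SetLike.one_mem_graded 𝒜⟩, by rw [map_one, one_mul]⟩,
      ⟨r, 1, h1P, by rw [map_one, one_mul]⟩⟩
  · rintro ⟨hxQ, r', t', ht'P, hx'⟩
    have hxpow : x ∈ {x : FractionRing R | ∃ (n : ℕ) (r : R), f α ^ n * x = f r} :=
      h1 ▸ hxQ
    obtain ⟨n0, r0, hn0⟩ := hxpow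
    have hp : ∃ k : ℕ, ∃ r : R, f α ^ k * x = f r := ⟨n0, r0, hn0⟩
    obtain ⟨r₂, hr₂⟩ := Nat.find_spec hp
    set k := Nat.find hp with hk
    rcases Nat.eq_zero_or_pos k with hk0 | hkpos
    · rw [hk0, pow_zero, one_mul] at hr₂
      exact ⟨r₂, hr₂.symm⟩
    · exfalso
      have hndvd : ¬ α ∣ r₂ := by
        rintro ⟨r₃, hr₃⟩
        have hlt : k - 1 < k := by omega
        apply Nat.find_min hp hlt
        refine ⟨r₃, ?_⟩
        have hmul : f α * (f α ^ (k - 1) * x) = f α * f r₃ := by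
          rw [← mul_assoc, ← pow_succ']
          rw [show k - 1 + 1 = k from by omega]
          rw [hr₂, hr₃, map_mul]
        exact mul_left_cancel₀ hfα0 hmul
      have hkey : t' * r₂ = α ^ k * r' := by
        apply finj
        rw [map_mul, map_mul, map_pow]
        calc f t' * f r₂ = f t' * (f α ^ k * x) := by rw [hr₂]
          _ = f α ^ k * (f t' * x) := by ring
          _ = f α ^ k * f r' := by rw [hx']
      have hdv : α ∣ t' * r₂ := by
        rw [hkey]
        exact dvd_mul_of_dvd_left (dvd_pow_self α (by omega)) r'
      rcases hprime.2.2 _ _ hdv with h | h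
      · exact ht'P (by rw [hα, Ideal.mem_span_singleton]; exact h)
      · exact hndvd h
end

section
/- Let Z be a locally Noetherian scheme with a 2-canonical module ω, and let M be a coherent sheaf on Z such that the natural map M → M^{∨∨} is an isomorphism, where (−)^∨ = Hom_{O_Z}(−, ω). If Z = Spec B is affine, then there is an exact sequence 0 → M → K^0 → K^1 where K^0, K^1 are finite direct sums of copies of ω. -/
open CategoryTheory

/-- `E` is an injective hull of the residue field of the local ring `A`:
an injective module containing the residue field as an essential submodule. -/
def IsInjectiveHullOfResidueField (A : Type) [CommRing A] [IsLocalRing A]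
    (E : Type) [AddCommGroup E] [Module A E] : Prop :=
  Module.Injective A E ∧
    ∃ f : IsLocalRing.ResidueField A →ₗ[A] E, Function.Injective f ∧
      ∀ N : Submodule A E, N ≠ ⊥ → N ⊓ LinearMap.range f ≠ ⊥

/-- Aoyama's definition: a finite module `K` over a Noetherian local ring `A`
of dimension `d` is a canonical module if `K ⊗_A Â ≅ Hom_A(H^d_m(A), E)`,
where `E` is an injective hull of the residue field. -/
def IsCanonicalModuleLocal (A : Type) [CommRing A] [IsLocalRing A]
    (K : Type) [AddCommGroup K] [Module A K] : Prop :=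
  Module.Finite A K ∧
  ∃ (E : Type) (_ : AddCommGroup E) (_ : Module A E),
    IsInjectiveHullOfResidueField A E ∧
    Nonempty
      ((TensorProduct A K (AdicCompletion (IsLocalRing.maximalIdeal A) A)) ≃ₗ[A]
        (((localCohomology (IsLocalRing.maximalIdeal A)
            (((ringKrullDim A).unbotD 0).untopD 0)).obj (ModuleCat.of A A)) →ₗ[A] E))

/-- At the prime `P`, the localization `ω_P` is either zero or a canonical
module of the local ring `B_P`. -/
def ZeroOrCanonicalAt (B : Type) [CommRing B] (P : Ideal B) (hP : P.IsPrime)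
    (ω : Type) [AddCommGroup ω] [Module B ω] : Prop :=
  haveI := hP
  Subsingleton (LocalizedModule P.primeCompl ω) ∨
    IsCanonicalModuleLocal (Localization.AtPrime P) (LocalizedModule P.primeCompl ω)

/-- A finite module `ω` over a Noetherian ring `B` is `n`-canonical if it
satisfies `(S'_n)` and is zero or canonical at every prime of height `< n`. -/
def IsNCanonicalModule (B : Type) [CommRing B]
    (ω : Type) [AddCommGroup ω] [Module B ω] (n : ℕ) : Prop :=
  Module.Finite B ω ∧ SerreS' B ω n ∧
    ∀ (P : Ideal B) (hP : P.IsPrime),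
      primeKrullDim B P hP < (n : WithBot ℕ∞) → ZeroOrCanonicalAt B P hP ω
/-- **Resolution by a 2-canonical module (affine case).**
Let `B` be a Noetherian ring (so `Z = Spec B` is an affine locally Noetherian
scheme) with a 2-canonical module `ω`, and let `M` be a finite `B`-module such
that the natural map `M → M^∨∨` is an isomorphism, where `(−)^∨ = Hom_B(−, ω)`.
Then there is an exact sequence `0 → M → K^0 → K^1` where `K^0`, `K^1` are
finite direct sums of copies of `ω`. -/
theorem exists_resolution_by_two_canonical
    (B : Type) [CommRing B] [IsNoetherianRing B]
    (ω : Type) [AddCommGroup ω] [Module B ω]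
    (hω : IsNCanonicalModule B ω 2)
    (M : Type) [AddCommGroup M] [Module B M] [Module.Finite B M]
    (hM : Function.Bijective
      ((LinearMap.id : (M →ₗ[B] ω) →ₗ[B] (M →ₗ[B] ω)).flip)) :
    ∃ (r₀ r₁ : ℕ) (f : M →ₗ[B] (Fin r₀ → ω)) (g : (Fin r₀ → ω) →ₗ[B] (Fin r₁ → ω)),
      Function.Injective f ∧ LinearMap.range f = LinearMap.ker g := by
  classical
  obtain ⟨hωfin, -, -⟩ := hω
  haveI : IsNoetherian B ω := isNoetherian_of_isNoetherianRing_of_finite B ω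
  -- `N = M^∨` is a finite module
  haveI : IsNoetherian B (M →ₗ[B] ω) := isNoetherian_linearMap B ω M
  -- choose a finite presentation of `N`
  obtain ⟨r₀, q, hq⟩ := Module.Finite.exists_fin' B (M →ₗ[B] ω)
  obtain ⟨r₁, s, hs⟩ := Module.Finite.exists_fin' B (LinearMap.ker q)
  set g₀ : (Fin r₁ → B) →ₗ[B] (Fin r₀ → B) := (LinearMap.ker q).subtype ∘ₗ s with hg₀def
  have hg₀ : LinearMap.range g₀ = LinearMap.ker q := by
    rw [hg₀def, LinearMap.range_comp, LinearMap.range_eq_top.mpr hs, Submodule.map_top,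
      Submodule.range_subtype]
  -- dualize
  set e : M →ₗ[B] ((M →ₗ[B] ω) →ₗ[B] ω) :=
    (LinearMap.id : (M →ₗ[B] ω) →ₗ[B] (M →ₗ[B] ω)).flip with he
  set dq : ((M →ₗ[B] ω) →ₗ[B] ω) →ₗ[B] ((Fin r₀ → B) →ₗ[B] ω) := LinearMap.lcomp B ω q with hdq
  set ε₀ : ((Fin r₀ → B) →ₗ[B] ω) ≃ₗ[B] (Fin r₀ → ω) := LinearEquiv.piRing B ω (Fin r₀) B with hε₀
  set ε₁ : ((Fin r₁ → B) →ₗ[B] ω) ≃ₗ[B] (Fin r₁ → ω) := LinearEquiv.piRing B ω (Fin r₁) B with hε₁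
  have hdqinj : Function.Injective dq := hq.injective_linearMapComp_right
  refine ⟨r₀, r₁, ε₀.toLinearMap ∘ₗ dq ∘ₗ e,
    ε₁.toLinearMap ∘ₗ LinearMap.lcomp B ω g₀ ∘ₗ ε₀.symm.toLinearMap, ?_, ?_⟩
  · exact ε₀.injective.comp (hdqinj.comp hM.1)
  · ext w
    simp only [LinearMap.mem_range, LinearMap.mem_ker, LinearMap.comp_apply,
      LinearEquiv.coe_coe]
    rw [show (0 : Fin r₁ → ω) = ε₁ 0 by simp]
    rw [ε₁.injective.eq_iff]
    constructor
    · rintro ⟨m, rfl⟩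
      simp only [LinearEquiv.symm_apply_apply]
      have hcomp : q.comp g₀ = 0 := by
        apply LinearMap.ext
        intro x
        have : g₀ x ∈ LinearMap.ker q := hg₀ ▸ LinearMap.mem_range_self g₀ x
        simpa using this
      show ((e m).comp q).comp g₀ = 0
      rw [LinearMap.comp_assoc, hcomp, LinearMap.comp_zero]
    · intro h
      set φ : (Fin r₀ → B) →ₗ[B] ω := ε₀.symm w with hφ
      have hker : LinearMap.ker q ≤ LinearMap.ker φ := by
        rw [← hg₀]
        rintro x ⟨y, rfl⟩
        have : φ.comp g₀ = 0 := h
        have := LinearMap.ext_iff.mp this y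
        simpa using this
      -- factor `φ` through `q`
      set ψ : (M →ₗ[B] ω) →ₗ[B] ω :=
        ((LinearMap.ker q).liftQ φ hker) ∘ₗ (q.quotKerEquivOfSurjective hq).symm.toLinearMap
        with hψ
      obtain ⟨m, hm⟩ := hM.2 ψ
      refine ⟨m, ?_⟩
      rw [← LinearEquiv.eq_symm_apply, hm]
      apply LinearMap.ext
      intro x
      have hqx : (q.quotKerEquivOfSurjective hq).symm (q x) =
          Submodule.Quotient.mk x := by
        rw [LinearEquiv.symm_apply_eq]
        simp [LinearMap.quotKerEquivOfSurjective]
      show ψ (q x) = φ x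
      rw [hψ]
      simp only [LinearMap.comp_apply, LinearEquiv.coe_coe, hqx]
      simp [Submodule.liftQ_apply]
end
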